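/- Let D be an edge set with u,v connected in G−D, and let P = π_{G−D}(u,v). If x is a vertex on P such that π(x,v) contains no edge of D, then for every vertex w lying on the suffix of P from x to v, the path π(w,v) contains no edge of D. -/

import Mathlib

open SimpleGraph

variable {V : Type*}

/-- Total weight of a walk with respect to edge weights `w`. -/
def walkWeight (w : Sym2 V → ℝ) {G : SimpleGraph V} {a b : V} (p : G.Walk a b) : ℝ :=
  (p.edges.map w).sum

/-- `p` is the/a minimum-weight path from `a` to `b` in `G`. -/
def IsShortestPath (w : Sym2 V → ℝ) (G : SimpleGraph V) {a b : V} (p : G.Walk a b) : Prop :=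
  p.IsPath ∧ ∀ q : G.Walk a b, q.IsPath → walkWeight w p ≤ walkWeight w q

/-- `Decomposable w G k p` : `p` is the concatenation of at most `k+1` shortest paths
of `G` interleaved with at most `k` single edges. -/
inductive Decomposable (w : Sym2 V → ℝ) (G : SimpleGraph V) :
    ℕ → ∀ {a b : V}, G.Walk a b → Prop
  | single {a b : V} (k : ℕ) (p : G.Walk a b) (hp : IsShortestPath w G p) :
      Decomposable w G k p
  | cons {a b c d : V} (k : ℕ) (p : G.Walk a b) (h : G.Adj b c) (q : G.Walk c d)
      (hp : IsShortestPath w G p) (hq : Decomposable w G k q) :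
      Decomposable w G (k + 1) (p.append (Walk.cons h q))

/-- The rank of a walk `p` in `G`: the least `k` such that `p` is `k`-decomposable. -/
noncomputable def pathRank (w : Sym2 V → ℝ) (G : SimpleGraph V) {a b : V} (p : G.Walk a b) : ℕ :=
  sInf {k | Decomposable w G k p}


lemma sublist_sum_le {l₁ l₂ : List ℝ} (h : l₁.Sublist l₂) (h0 : ∀ x ∈ l₂, 0 ≤ x) :
    l₁.sum ≤ l₂.sum := by
  induction h with
  | slnil => simp
  | @cons l₁ l₂ a h ih =>
    have := ih (fun x hx => h0 x (List.mem_cons_of_mem _ hx))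
    have ha := h0 a List.mem_cons_self
    simp only [List.sum_cons]; linarith
  | @cons_cons l₁ l₂ a h ih =>
    have := ih (fun x hx => h0 x (List.mem_cons_of_mem _ hx))
    simp only [List.sum_cons]; linarith

lemma exists_path_sublist [DecidableEq V] {G : SimpleGraph V} {a b : V} (p : G.Walk a b) :
    ∃ q : G.Walk a b, q.IsPath ∧ q.edges.Sublist p.edges := by
  induction p with
  | nil => exact ⟨.nil, Walk.IsPath.nil, List.Sublist.refl _⟩
  | @cons a c b h p ih =>
    obtain ⟨q, hq, hsub⟩ := ih
    by_cases ha : a ∈ q.support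
    · refine ⟨q.dropUntil a ha, hq.dropUntil ha, ?_⟩
      have hdrop : (q.dropUntil a ha).edges.Sublist q.edges := by
        have hspec := Walk.take_spec q ha
        have : q.edges = (q.takeUntil a ha).edges ++ (q.dropUntil a ha).edges := by
          conv_lhs => rw [← hspec]
          rw [Walk.edges_append]
        rw [this]
        exact List.sublist_append_right _ _
      exact (hdrop.trans hsub).trans (List.sublist_cons_self _ _)
    · exact ⟨Walk.cons h q, hq.cons ha, hsub.cons₂ _⟩

lemma shortest_le_walk [DecidableEq V] {H : SimpleGraph V} {w : Sym2 V → ℝ}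
    (hw : ∀ e ∈ H.edgeSet, 0 ≤ w e) {a b : V} {p : H.Walk a b}
    (hp : IsShortestPath w H p) (q : H.Walk a b) : walkWeight w p ≤ walkWeight w q := by
  obtain ⟨r, hr, hsub⟩ := exists_path_sublist q
  refine (hp.2 r hr).trans ?_
  exact sublist_sum_le (hsub.map w) (by
    intro x hx
    obtain ⟨e, he, rfl⟩ := List.mem_map.mp hx
    exact hw e (q.edges_subset_edgeSet he))

lemma walkWeight_append {G : SimpleGraph V} {w : Sym2 V → ℝ} {a b c : V}
    (p : G.Walk a b) (q : G.Walk b c) :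
    walkWeight w (p.append q) = walkWeight w p + walkWeight w q := by
  simp [walkWeight, Walk.edges_append]

lemma dropUntil_shortest [DecidableEq V] {H : SimpleGraph V} {w : Sym2 V → ℝ}
    (hw : ∀ e ∈ H.edgeSet, 0 ≤ w e) {a b : V} {p : H.Walk a b}
    (hp : IsShortestPath w H p) (x : V) (hx : x ∈ p.support) :
    IsShortestPath w H (p.dropUntil x hx) := by
  refine ⟨hp.1.dropUntil hx, fun q hq => ?_⟩
  have h1 : walkWeight w p
      = walkWeight w (p.takeUntil x hx) + walkWeight w (p.dropUntil x hx) := by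
    conv_lhs => rw [← Walk.take_spec p hx]
    exact walkWeight_append _ _
  have h2 := shortest_le_walk hw hp ((p.takeUntil x hx).append q)
  rw [walkWeight_append] at h2
  linarith

/-- Let `P = π_{G−D}(u,v)`.  If `x` is a vertex on `P` such that
`π(x,v)` contains no edge of `D`, then for every vertex `z` on the suffix of `P` from `x`
to `v`, the path `π(z,v)` contains no edge of `D`. -/
theorem stmt13 [Fintype V] [DecidableEq V] (G : SimpleGraph V) (w : Sym2 V → ℝ)
    (hw : ∀ e ∈ G.edgeSet, 0 < w e)
    (πG : ∀ a b : V, G.Walk a b) (hπG : ∀ a b : V, IsShortestPath w G (πG a b))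
    (huniqG : ∀ (a b : V) (p q : G.Walk a b),
      IsShortestPath w G p → IsShortestPath w G q → p = q)
    (D : Set (Sym2 V)) (hDsub : D ⊆ G.edgeSet)
    (huniqD : ∀ (a b : V) (p q : (G.deleteEdges D).Walk a b),
      IsShortestPath w (G.deleteEdges D) p → IsShortestPath w (G.deleteEdges D) q → p = q)
    (u v : V)
    (P : (G.deleteEdges D).Walk u v) (hP : IsShortestPath w (G.deleteEdges D) P)
    (x : V) (hx : x ∈ P.support)
    -- π(x,v) contains no edge of D
    (hxv : ∀ e ∈ (πG x v).edges, e ∉ D) :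
    ∀ z ∈ (P.dropUntil x hx).support, ∀ e ∈ (πG z v).edges, e ∉ D := by
  have hwD : ∀ e ∈ (G.deleteEdges D).edgeSet, 0 ≤ w e := by
    intro e he
    rw [edgeSet_deleteEdges] at he
    exact (hw e he.1).le
  have hwG : ∀ e ∈ G.edgeSet, 0 ≤ w e := fun e he => (hw e he).le
  intro z hz e he
  set Q := P.dropUntil x hx with hQdef
  have hQ : IsShortestPath w (G.deleteEdges D) Q := dropUntil_shortest hwD hP x hx
  -- transfer π(x,v) into G - D
  have hedges : ∀ e ∈ (πG x v).edges, e ∈ (G.deleteEdges D).edgeSet := by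
    intro e he
    rw [edgeSet_deleteEdges]
    exact ⟨(πG x v).edges_subset_edgeSet he, hxv e he⟩
  set T := (πG x v).transfer (G.deleteEdges D) hedges with hTdef
  have hTw : walkWeight w T = walkWeight w (πG x v) := by
    simp [walkWeight, hTdef, Walk.edges_transfer]
  have hTpath : T.IsPath := (hπG x v).1.transfer _
  have hT : IsShortestPath w (G.deleteEdges D) T := by
    refine ⟨hTpath, fun q hq => ?_⟩
    have hqe : ∀ e ∈ q.edges, e ∈ G.edgeSet := fun e he =>
      ((edgeSet_deleteEdges D ▸ q.edges_subset_edgeSet he : e ∈ G.edgeSet \ D)).1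
    have hq' : (q.transfer G hqe).IsPath := hq.transfer _
    have := (hπG x v).2 (q.transfer G hqe) hq'
    rw [hTw]
    calc walkWeight w (πG x v) ≤ walkWeight w (q.transfer G hqe) := this
      _ = walkWeight w q := by simp [walkWeight, Walk.edges_transfer]
  have hEq : Q = T := huniqD x v Q T hQ hT
  have hzsup : z ∈ (πG x v).support := by
    rw [hEq] at hz
    simpa [hTdef, Walk.support_transfer] using hz
  have hdrop : IsShortestPath w G ((πG x v).dropUntil z hzsup) :=
    dropUntil_shortest hwG (hπG x v) z hzsup
  have hzv : πG z v = (πG x v).dropUntil z hzsup :=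
    huniqG z v _ _ (hπG z v) hdrop
  rw [hzv] at he
  exact hxv e (Walk.edges_dropUntil_subset _ hzsup he)
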